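/- arXiv:2305.13987 — 5 statements merged into one kernel-verified Lean document; each statement's English description precedes it below -/
import Mathlib

section
/- Suppose S' ⪰ S (as structural encoding schemes). If the S-SEG-WL test distinguishes two graphs G_1 and G_2 as non-isomorphic after t iterations (i.e., the multisets of node labels at iteration t differ), then the S'-SEG-WL test also distinguishes G_1 and G_2 within t iterations. -/
/-- Canonical label space of the SEG-WL test after `t` iterations: at iteration `0` a label
is a pair (initial label, absolute structural encoding); at iteration `t+1` it is the
multiset of pairs (previous label, relative structural encoding).  Using this canonical
label space is equivalent to using arbitrary injective hash functions `Φ₀`, `Φ`. -/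
def SegLabel (X A C : Type) : ℕ → Type
  | 0 => X × A
  | t + 1 => Multiset (SegLabel X A C t × C)

/-- The canonical SEG-WL test labels: for a graph with initial labels `h0`, absolute
structural encoding `fA` and relative structural encoding `fR` (both already evaluated
on the given graph), `segwl h0 fA fR t v` is the label of vertex `v` after `t` iterations. -/
def segwl {V : Type} {X A C : Type} [Fintype V]
    (h0 : V → X) (fA : V → A) (fR : V → V → C) : (t : ℕ) → V → SegLabel X A C t
  | 0 => fun v => (h0 v, fA v)
  | t + 1 => fun v => Finset.univ.val.map (fun u => (segwl h0 fA fR t u, fR v u))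

/-- Projection of canonical labels along `pA`, `pR`. -/
def SegLabel.proj {X A C A' C' : Type} (pA : A' → A) (pR : C' → C) :
    (t : ℕ) → SegLabel X A' C' t → SegLabel X A C t
  | 0, (x, a) => (x, pA a)
  | t + 1, m => m.map (fun p => (SegLabel.proj pA pR t p.1, pR p.2))

theorem segwl_proj {V X A C A' C' : Type} [Fintype V]
    (h0 : V → X) (fA : V → A) (fR : V → V → C) (fA' : V → A') (fR' : V → V → C')
    (pA : A' → A) (pR : C' → C)
    (hA : ∀ v, fA v = pA (fA' v)) (hR : ∀ v u, fR v u = pR (fR' v u)) :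
    ∀ (t : ℕ) (v : V),
      segwl h0 fA fR t v = SegLabel.proj pA pR t (segwl h0 fA' fR' t v)
  | 0, v => by simp [segwl, SegLabel.proj, hA]; rfl
  | t + 1, v => by
    simp only [segwl, SegLabel.proj, Multiset.map_map]
    congr 1
    funext u
    simp [segwl_proj h0 fA fR fA' fR' pA pR hA hR t u, hR]

/-- If `S' ⪰ S` and the `S`-SEG-WL test distinguishes graphs `G₁` and `G₂` after `t`
iterations (the multisets of labels differ), then the `S'`-SEG-WL test distinguishes them
within `t` iterations. -/
theorem segwl_distinguishes_of_refines {V₁ V₂ X A C A' C' : Type} [Fintype V₁] [Fintype V₂]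
    (G₁ : SimpleGraph V₁) (G₂ : SimpleGraph V₂)
    (h₁ : V₁ → X) (h₂ : V₂ → X)
    (fA₁ : V₁ → A) (fR₁ : V₁ → V₁ → C) (fA₂ : V₂ → A) (fR₂ : V₂ → V₂ → C)
    (fA₁' : V₁ → A') (fR₁' : V₁ → V₁ → C') (fA₂' : V₂ → A') (fR₂' : V₂ → V₂ → C')
    (pA : A' → A) (pR : C' → C)
    (hA₁ : ∀ v, fA₁ v = pA (fA₁' v)) (hR₁ : ∀ v u, fR₁ v u = pR (fR₁' v u))
    (hA₂ : ∀ v, fA₂ v = pA (fA₂' v)) (hR₂ : ∀ v u, fR₂ v u = pR (fR₂' v u))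
    (t : ℕ)
    (hdist : Finset.univ.val.map (segwl h₁ fA₁ fR₁ t) ≠
      Finset.univ.val.map (segwl h₂ fA₂ fR₂ t)) :
    ∃ t' ≤ t, Finset.univ.val.map (segwl h₁ fA₁' fR₁' t') ≠
      Finset.univ.val.map (segwl h₂ fA₂' fR₂' t') := by
  refine ⟨t, le_refl t, fun h => hdist ?_⟩
  have e1 : Finset.univ.val.map (segwl h₁ fA₁ fR₁ t) =
      (Finset.univ.val.map (segwl h₁ fA₁' fR₁' t)).map (SegLabel.proj pA pR t) := by
    rw [Multiset.map_map]
    exact Multiset.map_congr rfl fun v _ => segwl_proj h₁ fA₁ fR₁ fA₁' fR₁' pA pR hA₁ hR₁ t v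
  have e2 : Finset.univ.val.map (segwl h₂ fA₂ fR₂ t) =
      (Finset.univ.val.map (segwl h₂ fA₂' fR₂' t)).map (SegLabel.proj pA pR t) := by
    rw [Multiset.map_map]
    exact Multiset.map_congr rfl fun v _ => segwl_proj h₂ fA₂ fR₂ fA₂' fR₂' pA pR hA₂ hR₂ t v
  rw [e1, e2, h]
end

section
/- Let Neighbor_R be the relative encoding with Neighbor_R(v,v)=0, Neighbor_R(v,u)=1 if v,u adjacent, and 2 otherwise. If the Neighbor-SEG-WL test assigns two vertices the same label at iteration t, then the WL test (1-WL color refinement) also assigns them the same label at iteration t. -/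
/-- Canonical label space of the 1-WL test after `t` iterations. -/
def WLLabel (X : Type) : ℕ → Type
  | 0 => X
  | t + 1 => WLLabel X t × Multiset (WLLabel X t)

/-- The canonical 1-WL (color refinement) labels: `wl G h0 t v` is the label of `v` after
`t` iterations, updated as `w_t(v) = (w_{t-1}(v), {{w_{t-1}(u) : u ∈ N(v)}})`. -/
def wl {V X : Type} [Fintype V] (G : SimpleGraph V) [DecidableRel G.Adj]
    (h0 : V → X) : (t : ℕ) → V → WLLabel X t
  | 0 => h0
  | t + 1 => fun v => (wl G h0 t v, (G.neighborFinset v).val.map (wl G h0 t))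

/-- The `Neighbor` relative structural encoding: `0` on the diagonal, `1` for adjacent
pairs and `2` for distinct non-adjacent pairs. -/
def neighborR {V : Type} [DecidableEq V] (G : SimpleGraph V) [DecidableRel G.Adj]
    (v u : V) : ℕ :=
  if v = u then 0 else if G.Adj v u then 1 else 2

private lemma aux_map {α β γ δ : Type*} (f : α → γ) (f' : β → γ) (g : α → δ) (g' : β → δ)
    (H : ∀ a b, f a = f' b → g a = g' b) :
    ∀ (s : Multiset α) (t : Multiset β), s.map f = t.map f' → s.map g = t.map g' := by
  intro s
  induction s using Multiset.induction with
  | empty =>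
    intro t h
    rw [Multiset.map_zero] at h
    rw [Multiset.map_eq_zero.mp h.symm]
    simp
  | cons a s ih =>
    intro t h
    have hmem : f a ∈ t.map f' := by
      rw [← h]; simp
    obtain ⟨b, hb, hfb⟩ := Multiset.mem_map.mp hmem
    obtain ⟨t', rfl⟩ := Multiset.exists_cons_of_mem hb
    rw [Multiset.map_cons, Multiset.map_cons, hfb] at h
    have h' : s.map f = t'.map f' := (Multiset.cons_inj_right _).mp h
    rw [Multiset.map_cons, Multiset.map_cons, H a b hfb.symm, ih t' h']

/-- If the `Neighbor`-SEG-WL test assigns vertices `v` (of `G₁`) and `u` (of `G₂`) the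
same label at iteration `t` (starting from initial labels `h₁`, `h₂`), then the WL test
also assigns them the same label at iteration `t`. -/
theorem wl_eq_of_neighbor_segwl_eq {V₁ V₂ X : Type} [Fintype V₁] [Fintype V₂]
    [DecidableEq V₁] [DecidableEq V₂]
    (G₁ : SimpleGraph V₁) (G₂ : SimpleGraph V₂)
    [DecidableRel G₁.Adj] [DecidableRel G₂.Adj]
    (h₁ : V₁ → X) (h₂ : V₂ → X) (t : ℕ) (v : V₁) (u : V₂)
    (h : segwl h₁ (fun _ => PUnit.unit) (neighborR G₁) t v =
         segwl h₂ (fun _ => PUnit.unit) (neighborR G₂) t u) :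
    wl G₁ h₁ t v = wl G₂ h₂ t u := by
  induction t generalizing v u with
  | zero =>
    simp only [segwl] at h
    exact congrArg Prod.fst h
  | succ t ih =>
    simp only [segwl] at h
    -- filter by second component = 0 : own previous label
    have key : ∀ (c : ℕ),
        (Finset.univ.val.filter (fun w => neighborR G₁ v w = c)).map
            (fun w => (segwl h₁ (fun _ => PUnit.unit) (neighborR G₁) t w, neighborR G₁ v w)) =
        (Finset.univ.val.filter (fun w => neighborR G₂ u w = c)).map
            (fun w => (segwl h₂ (fun _ => PUnit.unit) (neighborR G₂) t w, neighborR G₂ u w)) := by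
      intro c
      have := congrArg (Multiset.filter (fun x => x.2 = c)) h
      rwa [Multiset.filter_map, Multiset.filter_map] at this
    have f0 : Finset.univ.filter (fun w => neighborR G₁ v w = 0) = {v} := by
      ext w
      simp only [Finset.mem_filter, Finset.mem_univ, true_and, Finset.mem_singleton]; simp only [neighborR]
      split_ifs with h1 h2 <;> simp_all [eq_comm]
    have f0' : Finset.univ.filter (fun w => neighborR G₂ u w = 0) = {u} := by
      ext w
      simp only [Finset.mem_filter, Finset.mem_univ, true_and, Finset.mem_singleton]; simp only [neighborR]
      split_ifs with h1 h2 <;> simp_all [eq_comm]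
    have f1 : Finset.univ.filter (fun w => neighborR G₁ v w = 1) = G₁.neighborFinset v := by
      ext w
      simp only [Finset.mem_filter, Finset.mem_univ, true_and, SimpleGraph.mem_neighborFinset]
      simp only [neighborR]
      split_ifs with h1 h2 <;> simp_all
    have f1' : Finset.univ.filter (fun w => neighborR G₂ u w = 1) = G₂.neighborFinset u := by
      ext w
      simp only [Finset.mem_filter, Finset.mem_univ, true_and, SimpleGraph.mem_neighborFinset]
      simp only [neighborR]
      split_ifs with h1 h2 <;> simp_all
    have hfilter0 : Finset.univ.val.filter (fun w => neighborR G₁ v w = 0) = {v} := by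
      rw [← Finset.filter_val, f0]; rfl
    have hfilter0' : Finset.univ.val.filter (fun w => neighborR G₂ u w = 0) = {u} := by
      rw [← Finset.filter_val, f0']; rfl
    have hfilter1 : Finset.univ.val.filter (fun w => neighborR G₁ v w = 1) =
        (G₁.neighborFinset v).val := by
      rw [← Finset.filter_val, f1]
    have hfilter1' : Finset.univ.val.filter (fun w => neighborR G₂ u w = 1) =
        (G₂.neighborFinset u).val := by
      rw [← Finset.filter_val, f1']
    have k0 := key 0
    rw [hfilter0, hfilter0', Multiset.map_singleton, Multiset.map_singleton,
      Multiset.singleton_inj, Prod.mk.injEq] at k0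
    have hprev : wl G₁ h₁ t v = wl G₂ h₂ t u := ih v u k0.1
    have k1 := key 1
    rw [hfilter1, hfilter1'] at k1
    have k1' := congrArg (Multiset.map Prod.fst) k1
    rw [Multiset.map_map, Multiset.map_map] at k1'
    have hnbr : (G₁.neighborFinset v).val.map (wl G₁ h₁ t) =
        (G₂.neighborFinset u).val.map (wl G₂ h₂ t) :=
      aux_map _ _ _ _ (fun a b hab => ih a b hab) _ _ k1'
    show (wl G₁ h₁ t v, (G₁.neighborFinset v).val.map (wl G₁ h₁ t)) =
      (wl G₂ h₂ t u, (G₂.neighborFinset u).val.map (wl G₂ h₂ t))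
    rw [hprev, hnbr]
end

section
/- Two graphs are distinguished as non-isomorphic by the WL test (1-WL color refinement) if and only if they are distinguished by the Neighbor-SEG-WL test. -/
def wlNE {X : Type} (hX : Nonempty X) : ∀ t, Nonempty (WLLabel X t)
  | 0 => hX
  | t+1 => ⟨show WLLabel X (t+1) from ((wlNE hX t).some, 0)⟩

noncomputable def pick {α : Type} (hα : Nonempty α) (s : Multiset α) : α :=
  open Classical in if h : ∃ a, a ∈ s then h.choose else hα.some

lemma pick_singleton {α : Type} (hα : Nonempty α) (a : α) : pick hα {a} = a := by
  have h : ∃ b, b ∈ ({a} : Multiset α) := ⟨a, Multiset.mem_singleton_self a⟩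
  rw [pick, dif_pos h]
  have := h.choose_spec
  simpa using this

noncomputable def theta {X : Type} (hX : Nonempty X) : ∀ t, SegLabel X PUnit ℕ t → WLLabel X t
  | 0, p => p.1
  | t+1, m =>
    show WLLabel X t × Multiset (WLLabel X t) from
    (pick (wlNE hX t)
        (((show Multiset (SegLabel X PUnit ℕ t × ℕ) from m).filter (fun p => p.2 = 0)).map
          (fun p => theta hX t p.1)),
     ((show Multiset (SegLabel X PUnit ℕ t × ℕ) from m).filter (fun p => p.2 = 1)).map
          (fun p => theta hX t p.1))

noncomputable def psi {X : Type} : ∀ t, WLLabel X t → Multiset (WLLabel X t) → SegLabel X PUnit ℕ t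
  | 0, x, _M => show X × PUnit from (x, PUnit.unit)
  | t+1, w, M =>
    haveI := Classical.decEq (WLLabel X t)
    let w' : WLLabel X t × Multiset (WLLabel X t) := w
    let M' : Multiset (WLLabel X t) :=
      (show Multiset (WLLabel X t × Multiset (WLLabel X t)) from M).map Prod.fst
    show Multiset (SegLabel X PUnit ℕ t × ℕ) from
      (psi t w'.1 M', 0) ::ₘ
        (w'.2.map (fun y => (psi t y M', 1)) +
          (M' - (w'.1 ::ₘ w'.2)).map (fun y => (psi t y M', 2)))

lemma univ_split {V : Type} [Fintype V] [DecidableEq V] (G : SimpleGraph V)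
    [DecidableRel G.Adj] (v : V) :
    (Finset.univ.val : Multiset V)
      = v ::ₘ ((G.neighborFinset v).val
        + (Finset.univ.filter (fun u => u ≠ v ∧ ¬ G.Adj v u)).val) := by
  ext a
  rw [SimpleGraph.neighborFinset_eq_filter]
  simp only [Multiset.count_cons, Multiset.count_add, Finset.filter_val,
    Multiset.count_filter, Multiset.count_univ]
  by_cases h1 : a = v
  · subst h1; simp [G.irrefl]
  · by_cases h2 : G.Adj v a <;> simp [h1, h2]

lemma psi_spec {V X : Type} [Fintype V] [DecidableEq V] (G : SimpleGraph V)
    [DecidableRel G.Adj] (h0 : V → X) :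
    ∀ (t : ℕ) (v : V),
      psi t (wl G h0 t v) (Finset.univ.val.map (wl G h0 t))
        = segwl h0 (fun _ => PUnit.unit) (neighborR G) t v
  | 0, v => rfl
  | t+1, v => by
    classical
    have IH : ∀ u : V, psi t (wl G h0 t u) (Finset.univ.val.map (wl G h0 t))
        = segwl h0 (fun _ => PUnit.unit) (neighborR G) t u := psi_spec G h0 t
    simp only [psi, wl, segwl, Multiset.map_map, Function.comp]
    have hsub : Multiset.map (wl G h0 t) Finset.univ.val -
        (wl G h0 t v ::ₘ Multiset.map (wl G h0 t) (G.neighborFinset v).val)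
        = Multiset.map (wl G h0 t)
            (Finset.univ.filter (fun u => u ≠ v ∧ ¬ G.Adj v u)).val := by
      conv_lhs => rw [univ_split G v]
      rw [Multiset.map_cons, Multiset.map_add, Multiset.sub_cons, Multiset.erase_cons_head, add_tsub_cancel_left]
    have hM : Multiset.map Prod.fst (Multiset.map (fun v => (wl G h0 t v,
        Multiset.map (wl G h0 t) (G.neighborFinset v).val)) Finset.univ.val)
        = Multiset.map (wl G h0 t) Finset.univ.val := by
      rw [Multiset.map_map]; rfl
    erw [hM]
    rw [hsub]
    conv_rhs => rw [univ_split G v]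
    rw [Multiset.map_cons, Multiset.map_add]
    congr 1
    · rw [IH v]
      simp [neighborR]
    congr 1
    · apply Multiset.map_congr rfl
      intro u hu
      rw [Finset.mem_val, SimpleGraph.mem_neighborFinset] at hu
      simp [Function.comp, IH u, neighborR, hu, hu.ne]
    · rw [Multiset.map_map]
      apply Multiset.map_congr rfl
      intro u hu
      rw [Finset.mem_val, Finset.mem_filter] at hu
      simp [Function.comp, IH u, neighborR, hu.2.1, hu.2.2, (Ne.symm hu.2.1)]

lemma theta_spec {V X : Type} [Fintype V] [DecidableEq V] (G : SimpleGraph V)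
    [DecidableRel G.Adj] (h0 : V → X) (hX : Nonempty X) :
    ∀ (t : ℕ) (v : V),
      theta hX t (segwl h0 (fun _ => PUnit.unit) (neighborR G) t v) = wl G h0 t v
  | 0, v => rfl
  | t+1, v => by
    classical
    have IH : ∀ u : V, theta hX t (segwl h0 (fun _ => PUnit.unit) (neighborR G) t u)
        = wl G h0 t u := theta_spec G h0 hX t
    simp only [theta, segwl, wl, Multiset.filter_map, Function.comp, Multiset.map_map]
    have h0f : Multiset.filter (fun u : V => neighborR G v u = 0) Finset.univ.val = {v} := by
      have e : Multiset.filter (fun u : V => neighborR G v u = 0) Finset.univ.val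
          = Multiset.filter (fun u : V => u = v) Finset.univ.val := by
        apply Multiset.filter_congr; intro u _
        constructor
        · intro h
          by_contra hne
          have : v ≠ u := fun hh => hne hh.symm
          simp only [neighborR, if_neg this] at h
          split at h <;> omega
        · rintro rfl; simp [neighborR]
      rw [e, ← Finset.filter_val, Finset.filter_eq', if_pos (Finset.mem_univ v)]
      rfl
    have h1f : Multiset.filter (fun u : V => neighborR G v u = 1) Finset.univ.val
        = (G.neighborFinset v).val := by
      have e : Multiset.filter (fun u : V => neighborR G v u = 1) Finset.univ.val
          = Multiset.filter (fun u : V => G.Adj v u) Finset.univ.val := by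
        apply Multiset.filter_congr; intro u _
        constructor
        · intro h
          by_cases hv : v = u
          · simp [neighborR, hv] at h
          · by_contra hadj; simp [neighborR, hv, hadj] at h
        · intro h; simp [neighborR, h.ne, h]
      rw [e, ← Finset.filter_val, ← SimpleGraph.neighborFinset_eq_filter]
    rw [h0f, h1f, Multiset.map_singleton, IH v]
    congr 1
    · exact pick_singleton _ _
    · exact Multiset.map_congr rfl (fun u _ => IH u)


/-- Two labeled graphs are distinguished as non-isomorphic by the WL test (the multisets
of WL labels differ at some iteration) if and only if they are distinguished by the
`Neighbor`-SEG-WL test. -/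
theorem wl_iff_neighbor_segwl {V₁ V₂ X : Type} [Fintype V₁] [Fintype V₂]
    [DecidableEq V₁] [DecidableEq V₂]
    (G₁ : SimpleGraph V₁) (G₂ : SimpleGraph V₂)
    [DecidableRel G₁.Adj] [DecidableRel G₂.Adj]
    (h₁ : V₁ → X) (h₂ : V₂ → X) :
    (∃ t, Finset.univ.val.map (wl G₁ h₁ t) ≠ Finset.univ.val.map (wl G₂ h₂ t)) ↔
    (∃ t, Finset.univ.val.map (segwl h₁ (fun _ => PUnit.unit) (neighborR G₁) t) ≠
          Finset.univ.val.map (segwl h₂ (fun _ => PUnit.unit) (neighborR G₂) t)) := by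
  by_cases hX : Nonempty X
  · constructor
    · rintro ⟨t, ht⟩
      by_contra hseg
      push_neg at hseg
      apply ht
      have e1 : (Finset.univ.val.map (segwl h₁ (fun _ => PUnit.unit) (neighborR G₁) t)).map
          (theta hX t) = Finset.univ.val.map (wl G₁ h₁ t) := by
        rw [Multiset.map_map]
        exact Multiset.map_congr rfl (fun v _ => theta_spec G₁ h₁ hX t v)
      have e2 : (Finset.univ.val.map (segwl h₂ (fun _ => PUnit.unit) (neighborR G₂) t)).map
          (theta hX t) = Finset.univ.val.map (wl G₂ h₂ t) := by
        rw [Multiset.map_map]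
        exact Multiset.map_congr rfl (fun v _ => theta_spec G₂ h₂ hX t v)
      rw [← e1, ← e2, hseg t]
    · rintro ⟨t, ht⟩
      by_contra hwl
      push_neg at hwl
      apply ht
      have e1 : (Finset.univ.val.map (wl G₁ h₁ t)).map
          (fun x => psi t x (Finset.univ.val.map (wl G₁ h₁ t)))
          = Finset.univ.val.map (segwl h₁ (fun _ => PUnit.unit) (neighborR G₁) t) := by
        rw [Multiset.map_map]
        exact Multiset.map_congr rfl (fun v _ => psi_spec G₁ h₁ t v)
      have e2 : (Finset.univ.val.map (wl G₂ h₂ t)).map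
          (fun x => psi t x (Finset.univ.val.map (wl G₂ h₂ t)))
          = Finset.univ.val.map (segwl h₂ (fun _ => PUnit.unit) (neighborR G₂) t) := by
        rw [Multiset.map_map]
        exact Multiset.map_congr rfl (fun v _ => psi_spec G₂ h₂ t v)
      rw [← e1, ← e2, hwl t]
  · have e1 : IsEmpty V₁ := ⟨fun v => hX ⟨h₁ v⟩⟩
    have e2 : IsEmpty V₂ := ⟨fun v => hX ⟨h₂ v⟩⟩
    constructor <;> rintro ⟨t, ht⟩ <;> simp [Finset.univ_eq_empty] at ht
end

section
/- In a cycle graph C_l, for any two distinct non-adjacent vertices v, u with dist(v,u) < l/2, the shortest path between v and u is unique, and the vertex set of SPIS(v,u) has exactly dist(v,u)+1 vertices. -/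
open SimpleGraph

/-- The vertex set of the shortest path induced subgraph `SPIS(v, u)`. -/
noncomputable def spisSet {V : Type*} (G : SimpleGraph V) (v u : V) : Set V :=
  {s | G.edist v s + G.edist s u = G.edist v u}

namespace CycleSpis

open Fin.NatCast

lemma mod_resolve {a l : ℕ} (h0 : 0 < l) (h : a < 2 * l) :
    a % l = a ∨ (l ≤ a ∧ a % l = a - l) := by
  rcases lt_or_ge a l with h' | h'
  · exact Or.inl (Nat.mod_eq_of_lt h')
  · exact Or.inr ⟨h', by rw [Nat.mod_eq_sub_mod h', Nat.mod_eq_of_lt (by omega)]⟩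

variable {l : ℕ} [NeZero l]

lemma val1 (hl : 5 ≤ l) : (1 : Fin l).val = 1 := by
  rw [← Nat.cast_one, Fin.val_natCast]; exact Nat.mod_eq_of_lt (by omega)

lemma key (hl : 5 ≤ l) (c : Fin l) :
    min (c + 1).val (-(c + 1)).val ≤ min c.val (-c).val + 1 := by
  have hc := c.isLt
  have h1 : (c + 1).val = (c.val + 1) % l := by rw [Fin.add_def, val1 hl]
  have h2 : (-(c + 1)).val = (l - (c + 1).val) % l := by rw [Fin.neg_def]
  have h3 : (-c).val = (l - c.val) % l := by rw [Fin.neg_def]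
  rw [h1] at h2
  rw [h1, h2, h3]
  have m1 := mod_resolve (a := c.val + 1) (l := l) (by omega) (by omega)
  have m2 := mod_resolve (a := l - (c.val + 1) % l) (l := l) (by omega) (by omega)
  have m3 := mod_resolve (a := l - c.val) (l := l) (by omega) (by omega)
  omega

lemma sub_one_val (hl : 5 ≤ l) (c : Fin l) (hc : c.val ≠ 0) : (c - 1).val = c.val - 1 := by
  have hcl := c.isLt
  rw [Fin.sub_def, val1 hl]
  show ((l - 1) + c.val) % l = c.val - 1
  have h : (l - 1) + c.val = (c.val - 1) + l := by omega
  rw [h, Nat.add_mod_right]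
  exact Nat.mod_eq_of_lt (by omega)

lemma cg_adj (hl : 5 ≤ l) (x : Fin l) : (cycleGraph l).Adj x (x + 1) := by
  refine cycleGraph_adj'.mpr (Or.inr ?_)
  rw [add_sub_cancel_left, val1 hl]

lemma walk_lb (hl : 5 ≤ l) {x y : Fin l} (w : (cycleGraph l).Walk x y) :
    min (y - x).val (x - y).val ≤ w.length := by
  induction w with
  | nil => simp
  | @cons x z y h p ih =>
    rw [SimpleGraph.Walk.length_cons]
    rcases cycleGraph_adj'.mp h with h1 | h1
    · -- x - z = 1
      have hxz : x - z = 1 := Fin.ext (by rw [h1, val1 hl])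
      have hk := key hl (z - y)
      have e1 : (z - y) + 1 = x - y := by
        rw [add_comm, ← hxz]; exact sub_add_sub_cancel x z y
      rw [e1, neg_sub x y, neg_sub z y] at hk
      calc min (y - x).val (x - y).val = min (x - y).val (y - x).val := min_comm _ _
        _ ≤ min (z - y).val (y - z).val + 1 := hk
        _ = min (y - z).val (z - y).val + 1 := by rw [min_comm]
        _ ≤ p.length + 1 := Nat.add_le_add_right ih 1
    · -- z - x = 1
      have hzx : z - x = 1 := Fin.ext (by rw [h1, val1 hl])
      have hk := key hl (y - z)
      have e1 : (y - z) + 1 = y - x := by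
        rw [← hzx]; exact sub_add_sub_cancel y z x
      rw [e1, neg_sub y x, neg_sub y z] at hk
      exact hk.trans (Nat.add_le_add_right ih 1)

lemma val_sub_add_one (hl : 5 ≤ l) {x u : Fin l} (h1 : (u - x).val ≠ 0) :
    (u - (x + 1)).val = (u - x).val - 1 := by
  rw [sub_add_eq_sub_sub, sub_one_val hl _ h1]

lemma exists_walk (hl : 5 ≤ l) :
    ∀ (k : ℕ) (x u : Fin l), (u - x).val = k →
      ∃ w : (cycleGraph l).Walk x u, w.length = k := by
  intro k
  induction k with
  | zero =>
    intro x u h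
    have : u - x = 0 := Fin.ext (by simp [h])
    have hxu : x = u := (sub_eq_zero.mp this).symm
    subst hxu
    exact ⟨SimpleGraph.Walk.nil, rfl⟩
  | succ k ih =>
    intro x u h
    obtain ⟨w, hw⟩ := ih (x + 1) u (by rw [val_sub_add_one hl (by omega), h]; omega)

    exact ⟨SimpleGraph.Walk.cons (cg_adj hl x) w, by
      rw [SimpleGraph.Walk.length_cons, hw]⟩

lemma cg_connected (hl : 5 ≤ l) : (cycleGraph l).Connected := by
  obtain ⟨m, rfl⟩ : ∃ m, l = m + 1 := ⟨l - 1, by omega⟩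
  exact cycleGraph_connected

lemma dist_formula (hl : 5 ≤ l) (v u : Fin l) :
    (cycleGraph l).dist v u = min (u - v).val (v - u).val := by
  apply le_antisymm
  · apply le_min
    · obtain ⟨w, hw⟩ := exists_walk hl (u - v).val v u rfl
      exact hw ▸ SimpleGraph.dist_le w
    · rw [SimpleGraph.dist_comm]
      obtain ⟨w, hw⟩ := exists_walk hl (v - u).val u v rfl
      exact hw ▸ SimpleGraph.dist_le w
  · obtain ⟨w, hw⟩ := ((cg_connected hl) v u).exists_walk_length_eq_dist
    exact hw ▸ walk_lb hl w

lemma step_forced (hl : 5 ≤ l) {x z u : Fin l} (hadj : (cycleGraph l).Adj x z)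
    (q : (cycleGraph l).Walk z u) (hA : 2 * (u - x).val < l) (hA1 : 1 ≤ (u - x).val)
    (hq : q.length = (u - x).val - 1) : z = x + 1 := by
  rcases cycleGraph_adj'.mp hadj with h1 | h1
  · -- x - z = 1, bad direction
    exfalso
    have hxz : x - z = 1 := Fin.ext (by rw [h1, val1 hl])
    have e : (u - x) + 1 = u - z := by
      rw [← hxz]; exact sub_add_sub_cancel u x z
    have hvlt := (u - x).isLt
    have hv : (u - z).val = (u - x).val + 1 := by
      rw [← e, Fin.add_def, val1 hl]
      exact Nat.mod_eq_of_lt (by omega)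
    have hzu : (z - u).val = (l - (u - z).val) % l := by
      rw [← neg_sub u z, Fin.neg_def]
    have hlb := walk_lb hl q
    have m1 := mod_resolve (a := l - (u - z).val) (l := l) (by omega) (by omega)
    omega
  · have hzx : z - x = 1 := Fin.ext (by rw [h1, val1 hl])
    have := sub_eq_iff_eq_add.mp hzx
    rw [this, add_comm]

lemma uniq_walk (hl : 5 ≤ l) {u : Fin l} :
    ∀ {x : Fin l} (w1 : (cycleGraph l).Walk x u),
      2 * (u - x).val < l → w1.length = (u - x).val →
      ∀ (w2 : (cycleGraph l).Walk x u), w2.length = (u - x).val → w1 = w2 := by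
  intro x w1
  induction w1 with
  | nil =>
    intro h2 hl1 w2 hl2
    rw [sub_self] at hl2
    cases w2 with
    | nil => rfl
    | cons h p => simp at hl2
  | @cons x y u h p ih =>
    intro h2 hl1 w2 hl2
    rw [SimpleGraph.Walk.length_cons] at hl1
    have hA1 : 1 ≤ (u - x).val := by omega
    cases w2 with
    | nil => rw [sub_self] at hl1; simp at hl1
    | @cons _ y' _ h' p' =>
      rw [SimpleGraph.Walk.length_cons] at hl2
      have hy : y = x + 1 := step_forced hl h p h2 hA1 (by omega)
      have hy' : y' = x + 1 := step_forced hl h' p' h2 hA1 (by omega)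
      subst hy; subst hy'
      have hval : (u - (x + 1)).val = (u - x).val - 1 := val_sub_add_one hl (by omega)
      have := ih (by omega) (by omega) p' (by omega)
      rw [this]

lemma edist_cast (hl : 5 ≤ l) (a b : Fin l) :
    (cycleGraph l).edist a b = ((cycleGraph l).dist a b : ℕ∞) := by
  obtain ⟨w⟩ := (cg_connected hl) a b
  have hne : (cycleGraph l).edist a b ≠ ⊤ :=
    ne_top_of_le_ne_top (WithTop.natCast_ne_top _) (SimpleGraph.edist_le w)
  rw [SimpleGraph.dist, ENat.coe_toNat hne]

lemma mem_spis_iff (hl : 5 ≤ l) (v u s : Fin l) :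
    s ∈ spisSet (cycleGraph l) v u ↔
      (cycleGraph l).dist v s + (cycleGraph l).dist s u = (cycleGraph l).dist v u := by
  simp only [spisSet, Set.mem_setOf_eq, edist_cast hl, ← Nat.cast_add, Nat.cast_inj]

lemma main (hl : 5 ≤ l) (v u : Fin l) (hne : v ≠ u) (h2 : 2 * ((u - v : Fin l)).val < l) :
    (∃! p : (cycleGraph l).Walk v u, p.IsPath ∧ p.length = (cycleGraph l).dist v u) ∧
    (spisSet (cycleGraph l) v u).ncard = (cycleGraph l).dist v u + 1 := by
  set A := ((u - v : Fin l)).val with hA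
  have hAl : A < l := (u - v).isLt
  have hA0 : A ≠ 0 := by
    intro h0
    exact hne (sub_eq_zero.mp (Fin.ext (h0.trans (by rfl)))).symm
  have hB : ((v - u : Fin l)).val = l - A := by
    rw [← neg_sub u v, Fin.neg_def]
    exact Nat.mod_eq_of_lt (by omega)
  have hd : (cycleGraph l).dist v u = A := by
    rw [dist_formula hl v u, ← hA, hB]
    omega
  constructor
  · obtain ⟨p, hp, hplen⟩ := ((cg_connected hl) v u).exists_path_of_dist
    exact ⟨p, ⟨hp, hplen⟩, fun q ⟨_, hq⟩ =>
      uniq_walk hl q (by omega) (by omega) p (by omega)⟩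
  · have hset : spisSet (cycleGraph l) v u = (fun i : ℕ => v + (i : Fin l)) '' Set.Iic A := by
      ext s
      rw [mem_spis_iff hl, Set.mem_image]
      have hbl := (s - v).isLt
      have hcl := (u - s).isLt
      have hbc : ((u - s).val + (s - v).val) % l = A := by
        have hav : ((u - s) + (s - v)).val = ((u - s).val + (s - v).val) % l := by
          rw [Fin.add_def]
        rw [← hav, sub_add_sub_cancel]
      have hd1 : (cycleGraph l).dist v s
          = min (s - v).val ((l - (s - v).val) % l) := by
        rw [dist_formula hl v s, ← neg_sub s v, Fin.neg_def]
      have hd2 : (cycleGraph l).dist s u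
          = min (u - s).val ((l - (u - s).val) % l) := by
        rw [dist_formula hl s u, ← neg_sub u s, Fin.neg_def]
      have m1 := mod_resolve (a := l - (s - v).val) (l := l) (by omega) (by omega)
      have m2 := mod_resolve (a := l - (u - s).val) (l := l) (by omega) (by omega)
      have m3 := mod_resolve (a := (u - s).val + (s - v).val) (l := l) (by omega) (by omega)
      constructor
      · intro hs
        rw [hd1, hd2, hd] at hs
        refine ⟨(s - v).val, by simp only [Set.mem_Iic]; omega, ?_⟩
        rw [Fin.cast_val_eq_self]
        exact add_sub_cancel v s
      · rintro ⟨i, hi, rfl⟩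
        simp only [Set.mem_Iic] at hi
        have hb : ((v + (i : Fin l)) - v).val = i := by
          rw [add_sub_cancel_left, Fin.val_natCast]
          exact Nat.mod_eq_of_lt (by omega)
        rw [hd1, hd2, hd, hb]
        rw [hb] at hbc m3 m1
        omega
    rw [hset, Set.ncard_image_of_injOn, ← Finset.coe_Iic, Set.ncard_coe_finset,
      Nat.card_Iic, hd]
    intro i hi j hj hij
    simp only [Set.mem_Iic] at hi hj
    have : (i : Fin l) = (j : Fin l) := by
      have := add_left_cancel hij
      exact this
    have hv : i % l = j % l := by rw [← Fin.val_natCast i l, ← Fin.val_natCast j l, this]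
    rw [Nat.mod_eq_of_lt (by omega), Nat.mod_eq_of_lt (by omega)] at hv
    exact hv

end CycleSpis

open CycleSpis in
/-- In a cycle `C_l` (`l ≥ 5`), for any two distinct non-adjacent vertices `v, u` with
`dist(v,u) < l/2`, the shortest path between `v` and `u` is unique, and the vertex set of
`SPIS(v,u)` has exactly `dist(v,u) + 1` vertices. -/
theorem cycle_spis_card {l : ℕ} (hl : 5 ≤ l) (v u : Fin l)
    (hne : v ≠ u) (hadj : ¬(cycleGraph l).Adj v u)
    (hdist : 2 * (cycleGraph l).dist v u < l) :
    (∃! p : (cycleGraph l).Walk v u, p.IsPath ∧ p.length = (cycleGraph l).dist v u) ∧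
    (spisSet (cycleGraph l) v u).ncard = (cycleGraph l).dist v u + 1 := by
  haveI : NeZero l := ⟨by omega⟩
  rcases le_total ((u - v : Fin l)).val ((v - u : Fin l)).val with h | h
  · have h2 : 2 * ((u - v : Fin l)).val < l := by
      rw [dist_formula hl v u, min_eq_left h] at hdist
      exact hdist
    exact main hl v u hne h2
  · have h2 : 2 * ((v - u : Fin l)).val < l := by
      rw [dist_formula hl v u, min_eq_right h] at hdist
      exact hdist
    obtain ⟨⟨p, ⟨hp, hplen⟩, huniq⟩, hcard⟩ := main hl u v (Ne.symm hne) h2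
    have hdc : (cycleGraph l).dist u v = (cycleGraph l).dist v u := SimpleGraph.dist_comm
    have hss : spisSet (cycleGraph l) v u = spisSet (cycleGraph l) u v := by
      ext s
      simp only [spisSet, Set.mem_setOf_eq]
      rw [SimpleGraph.edist_comm (u := v) (v := s), SimpleGraph.edist_comm (u := s) (v := u),
        SimpleGraph.edist_comm (u := v) (v := u),
        add_comm ((cycleGraph l).edist s v) ((cycleGraph l).edist u s)]
    constructor
    · refine ⟨p.reverse, ⟨hp.reverse, by rw [SimpleGraph.Walk.length_reverse, hplen, hdc]⟩, ?_⟩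
      intro q ⟨hq1, hq2⟩
      have := huniq q.reverse ⟨hq1.reverse, by rw [SimpleGraph.Walk.length_reverse, hq2, hdc]⟩
      rw [← q.reverse_reverse, this]
    · rw [hss, ← hdc]
      exact hcard
end

section
/- For any vertex s in V_SPIS(v,u), the distance from v to s computed within the induced subgraph SPIS(v,u) equals the distance from v to s in the whole graph G. -/
private lemma lift_walk {V : Type*} {G : SimpleGraph V} {S : Set V} :
    ∀ {a b : V} (p : G.Walk a b) (_ : ∀ x ∈ p.support, x ∈ S) (ha : a ∈ S) (hb : b ∈ S),
    ∃ q : (G.induce S).Walk ⟨a, ha⟩ ⟨b, hb⟩, q.length = p.length := by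
  intro a b p
  induction p with
  | nil => exact fun _ _ _ => ⟨SimpleGraph.Walk.nil, rfl⟩
  | @cons a c b hadj p ih =>
    intro hsup ha hb
    have hc : c ∈ S := hsup c (by simp)
    obtain ⟨q, hq⟩ := ih (fun x hx => hsup x (by simp [hx])) hc hb
    exact ⟨SimpleGraph.Walk.cons (by simpa using hadj) q, by simp [hq]⟩

/-- For any vertex `s` of `SPIS(v,u)`, the distance from `v` to `s` computed inside the
induced subgraph `SPIS(v,u)` equals the distance from `v` to `s` in `G`. -/
theorem spis_dist_eq {V : Type*} (G : SimpleGraph V) (v u : V)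
    (hreach : G.Reachable v u) (s : V)
    (hv : v ∈ spisSet G v u) (hs : s ∈ spisSet G v u) :
    (G.induce (spisSet G v u)).dist ⟨v, hv⟩ ⟨s, hs⟩ = G.dist v s := by
  classical
  have hvu : G.edist v u ≠ ⊤ := SimpleGraph.edist_ne_top_iff_reachable.mpr hreach
  have hvs : G.edist v s ≠ ⊤ := fun h => hvu (by rw [← hs, h]; simp)
  have hsu : G.edist s u ≠ ⊤ := fun h => hvu (by rw [← hs, h]; simp)
  obtain ⟨p, hp⟩ := SimpleGraph.exists_walk_of_edist_ne_top hvs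
  obtain ⟨q, hq⟩ := SimpleGraph.exists_walk_of_edist_ne_top hsu
  -- every vertex of p is in spisSet
  have hsup : ∀ x ∈ p.support, x ∈ spisSet G v u := by
    intro x hx
    have h1 : G.edist v x ≤ (p.takeUntil x hx).length := SimpleGraph.edist_le _
    have h2 : G.edist x u ≤ ((p.dropUntil x hx).append q).length := SimpleGraph.edist_le _
    have hle : G.edist v x + G.edist x u ≤ G.edist v u := by
      calc G.edist v x + G.edist x u
          ≤ ((p.takeUntil x hx).length : ℕ∞) + ((p.dropUntil x hx).append q).length :=
            add_le_add h1 h2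
        _ = ((p.takeUntil x hx).length + ((p.dropUntil x hx).length + q.length) : ℕ) := by
            push_cast [SimpleGraph.Walk.length_append]; ring
        _ = (p.length + q.length : ℕ) := by
            rw [← add_assoc, ← SimpleGraph.Walk.length_append,
              SimpleGraph.Walk.take_spec p hx]
        _ = G.edist v s + G.edist s u := by push_cast [hp, hq]; rfl
        _ = G.edist v u := hs
    exact le_antisymm hle (SimpleGraph.edist_triangle)
  obtain ⟨q', hq'⟩ := lift_walk p hsup hv hs
  -- edist equality
  have h1 : (G.induce (spisSet G v u)).edist ⟨v, hv⟩ ⟨s, hs⟩ ≤ G.edist v s := by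
    rw [← hp, ← hq']; exact SimpleGraph.edist_le _
  have h2 : G.edist v s ≤ (G.induce (spisSet G v u)).edist ⟨v, hv⟩ ⟨s, hs⟩ := by
    have hne : (G.induce (spisSet G v u)).edist ⟨v, hv⟩ ⟨s, hs⟩ ≠ ⊤ :=
      ne_top_of_le_ne_top (ENat.coe_ne_top q'.length) (SimpleGraph.edist_le q')
    obtain ⟨w, hw⟩ := SimpleGraph.exists_walk_of_edist_ne_top hne
    have := SimpleGraph.edist_le (w.map (SimpleGraph.Embedding.induce (spisSet G v u)).toHom)
    rwa [SimpleGraph.Walk.length_map, hw] at this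
  have : (G.induce (spisSet G v u)).edist ⟨v, hv⟩ ⟨s, hs⟩ = G.edist v s := le_antisymm h1 h2
  simp only [SimpleGraph.dist, this]
end
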